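/- Let (⋯ → G₂ → G₁ → G₀) be an inverse sequence of pointed sets that either is an inverse sequence of groups and group homomorphisms or has every Gᵢ finite, and assume it satisfies the Mittag-Leffler condition. If the inverse limit lim Gᵢ is discrete in the inverse limit topology (each Gᵢ carrying the discrete topology), then the sequence satisfies the dual Mittag-Leffler condition. -/
import Mathlib


/-- An inverse sequence of pointed sets `⋯ → X₂ → X₁ → X₀`, presented by its
compatible composite basepoint-preserving bonding maps `bond h : X j → X i` for
`i ≤ j`; the one-step bonding maps are `bond (Nat.le_succ i) : X (i+1) → X i`. -/
structure PointedInvSeq (X : ℕ → Type) (pt : ∀ i, X i) : Type where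
  bond : ∀ ⦃i j : ℕ⦄, i ≤ j → X j → X i
  bond_refl : ∀ i (x : X i), bond (le_refl i) x = x
  bond_comp : ∀ ⦃i j k : ℕ⦄ (hij : i ≤ j) (hjk : j ≤ k) (x : X k),
    bond (hij.trans hjk) x = bond hij (bond hjk x)
  bond_pt : ∀ ⦃i j : ℕ⦄ (h : i ≤ j), bond h (pt j) = pt i

namespace PointedInvSeq

variable {X : ℕ → Type} {pt : ∀ i, X i}

/-- The Mittag-Leffler condition: for each `i` there is `j > i` such that for all
`k > j` the image of `X k → X i` equals the image of `X j → X i`. -/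
def MittagLeffler (S : PointedInvSeq X pt) : Prop :=
  ∀ i, ∃ j, ∃ hij : i < j, ∀ k, ∀ hjk : j < k,
    Set.range (S.bond (hij.le.trans hjk.le)) = Set.range (S.bond hij.le)

/-- The dual Mittag-Leffler condition: there is `k` such that for every `j > k`
there is `i > j` for which the kernel (preimage of the basepoint) of `X i → X k`
equals the kernel of `X i → X j`. -/
def DualMittagLeffler (S : PointedInvSeq X pt) : Prop :=
  ∃ k, ∀ j, ∀ hkj : k < j, ∃ i, ∃ hji : j < i,
    {x : X i | S.bond (hkj.le.trans hji.le) x = pt k} =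
      {x : X i | S.bond hji.le x = pt j}

end PointedInvSeq

/-- If an inverse sequence of pointed sets either consists of groups and group
homomorphisms or has all terms finite, satisfies the Mittag-Leffler condition, and
its inverse limit (topologized as a subspace of the product of the discrete spaces
`Xᵢ`) is discrete, then the sequence satisfies the dual Mittag-Leffler condition. -/
theorem dualMittagLeffler_of_mittagLeffler_of_discrete_lim
    {X : ℕ → Type} (pt : ∀ i, X i) (S : PointedInvSeq X pt)
    [∀ i, TopologicalSpace (X i)] [∀ i, DiscreteTopology (X i)]
    (hcase : (∀ i, Finite (X i)) ∨
      ∃ grp : ∀ i, Group (X i),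
        (∀ i, pt i = (letI := grp i; (1 : X i))) ∧
        ∀ ⦃i j : ℕ⦄ (h : i ≤ j) (x y : X j),
          S.bond h (letI := grp j; x * y) =
            (letI := grp i; S.bond h x * S.bond h y))
    (hML : S.MittagLeffler)
    (hdisc : DiscreteTopology
      {g : ∀ i, X i // ∀ i, S.bond (Nat.le_succ i) (g (i + 1)) = g i}) :
    S.DualMittagLeffler := by
  classical
  clear hcase
  choose J hJlt hJstab using hML
  set A : ∀ j, Set (X j) := fun j => Set.range (S.bond (hJlt j).le) with hAdef
  -- stability of images
  have stab : ∀ j m (h : J j ≤ m), Set.range (S.bond ((hJlt j).le.trans h)) = A j := by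
    intro j m h
    rcases h.lt_or_eq with h' | h'
    · exact hJstab j m h'
    · subst h'
      rfl
  have memA : ∀ (j m : ℕ) (h : j ≤ m), J j ≤ m → ∀ x : X m, S.bond h x ∈ A j := by
    intro j m h hm x
    rw [← stab j m hm]
    exact ⟨x, rfl⟩
  have Adown : ∀ {i j : ℕ} (h : i ≤ j), ∀ y ∈ A j, S.bond h y ∈ A i := by
    intro i j h y hy
    have hjm : j ≤ max (J j) (J i) := (hJlt j).le.trans (le_max_left _ _)
    rw [← stab j (max (J j) (J i)) (le_max_left _ _)] at hy
    obtain ⟨w, hw⟩ := hy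
    have him : i ≤ max (J j) (J i) := h.trans hjm
    have hby : S.bond h y = S.bond him w := by
      rw [← hw]
      exact (S.bond_comp h hjm w).symm
    rw [hby]
    exact memA i _ him (le_max_right _ _) w
  have Asurj : ∀ {j j' : ℕ} (h : j ≤ j'), ∀ y ∈ A j, ∃ z ∈ A j', S.bond h z = y := by
    intro j j' h y hy
    have hjm : j ≤ max (J j) (J j') := (hJlt j).le.trans (le_max_left _ _)
    have hj'm : j' ≤ max (J j) (J j') := (hJlt j').le.trans (le_max_right _ _)
    rw [← stab j (max (J j) (J j')) (le_max_left _ _)] at hy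
    obtain ⟨w, hw⟩ := hy
    refine ⟨S.bond hj'm w, memA j' _ hj'm (le_max_right _ _) w, ?_⟩
    rw [← S.bond_comp h hj'm]
    exact hw
  -- any element of the stable image extends to a thread
  have thread : ∀ (j : ℕ) (y : X j), y ∈ A j → ∃ g : ∀ i, X i,
      (∀ i, S.bond (Nat.le_succ i) (g (i + 1)) = g i) ∧
      g j = y ∧ ∀ (i : ℕ) (h : i ≤ j), g i = S.bond h y := by
    intro j y hy
    let d : ∀ n, {x : X (j + n) // x ∈ A (j + n)} := fun n =>
      Nat.rec ⟨y, hy⟩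
        (fun n dn => ⟨(Asurj (Nat.le_succ (j + n)) dn.1 dn.2).choose,
          (Asurj (Nat.le_succ (j + n)) dn.1 dn.2).choose_spec.1⟩) n
    have hd : ∀ n, S.bond (Nat.le_succ (j + n)) (d (n + 1)).1 = (d n).1 :=
      fun n => (Asurj (Nat.le_succ (j + n)) (d n).1 (d n).2).choose_spec.2
    have dcongr : ∀ {i n m : ℕ} (hnm : n = m) (h : i ≤ j + n) (h' : i ≤ j + m),
        S.bond h (d n).1 = S.bond h' (d m).1 := by
      intro i n m hnm h h'
      subst hnm
      rfl
    have hstep : ∀ {i : ℕ} (n : ℕ) (h : i ≤ j + n),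
        S.bond (h.trans (Nat.le_succ (j + n))) (d (n + 1)).1 = S.bond h (d n).1 := by
      intro i n h
      rw [S.bond_comp h (Nat.le_succ (j + n)), hd n]
    have hjd : ∀ i, i ≤ j + (i - j) := fun i => by omega
    let g : ∀ i, X i := fun i => S.bond (hjd i) (d (i - j)).1
    have hg1 : ∀ i, S.bond (Nat.le_succ i) (g (i + 1)) = g i := by
      intro i
      show S.bond (Nat.le_succ i) (S.bond (hjd (i + 1)) (d (i + 1 - j)).1)
        = S.bond (hjd i) (d (i - j)).1
      rw [← S.bond_comp (Nat.le_succ i) (hjd (i + 1))]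
      by_cases hij : i + 1 ≤ j
      · have hle0 : i ≤ j + 0 := by omega
        exact (dcongr (show i + 1 - j = 0 by omega) _ hle0).trans
          (dcongr (show i - j = 0 by omega) _ hle0).symm
      · have h2 : i ≤ j + (i - j) := hjd i
        exact (dcongr (show i + 1 - j = (i - j) + 1 by omega) _
          (h2.trans (Nat.le_succ _))).trans (hstep (i - j) h2)
    have hgd : ∀ (i : ℕ) (h : i ≤ j), g i = S.bond h y := by
      intro i h
      show S.bond (hjd i) (d (i - j)).1 = S.bond h y
      rw [dcongr (show i - j = 0 by omega) (hjd i) (show i ≤ j + 0 from h)]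
      exact rfl
    have hgj : g j = y := by
      rw [hgd j (le_refl j)]
      exact S.bond_refl j y
    exact ⟨g, hg1, hgj, hgd⟩
  -- threads are compatible with all bonding maps
  have bond_thread : ∀ (g : ∀ i, X i), (∀ i, S.bond (Nat.le_succ i) (g (i + 1)) = g i) →
      ∀ {i m : ℕ} (h : i ≤ m), S.bond h (g m) = g i := by
    intro g hgt i m h
    induction m, h using Nat.le_induction with
    | base => exact S.bond_refl i (g i)
    | succ n hn ih =>
      have : S.bond (hn.trans (Nat.le_succ n)) (g (n + 1)) = g i := by
        rw [S.bond_comp hn (Nat.le_succ n), hgt n, ih]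
      exact this
  -- discreteness gives an isolation level N
  let p0 : {g : ∀ i, X i // ∀ i, S.bond (Nat.le_succ i) (g (i + 1)) = g i} :=
    ⟨fun i => pt i, fun i => S.bond_pt (Nat.le_succ i)⟩
  have hopen : IsOpen {p0} := isOpen_discrete {p0}
  obtain ⟨U, hUopen, hUpre⟩ := isOpen_induced_iff.mp hopen
  have hp0U : (fun i => pt i) ∈ U := by
    have h1 : p0 ∈ Subtype.val ⁻¹' U := by
      rw [hUpre]
      exact rfl
    exact h1
  obtain ⟨I, u, hu, hIU⟩ := isOpen_pi_iff.mp hUopen _ hp0U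
  set N := I.sup id with hNdef
  have iso : ∀ g : ∀ i, X i, ∀ hg : ∀ i, S.bond (Nat.le_succ i) (g (i + 1)) = g i,
      g N = pt N → ∀ m, g m = pt m := by
    intro g hg hgN m
    have hgU : g ∈ U := by
      apply hIU
      intro i hi
      have hiN : i ≤ N := Finset.le_sup (f := id) hi
      have hgi : g i = pt i := by
        rw [← bond_thread g hg hiN, hgN, S.bond_pt]
      rw [hgi]
      exact (hu i hi).2
    have h1 : (⟨g, hg⟩ : {g : ∀ i, X i // ∀ i, S.bond (Nat.le_succ i) (g (i + 1)) = g i})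
        ∈ Subtype.val ⁻¹' U := hgU
    rw [hUpre] at h1
    have h2 : (⟨g, hg⟩ : {g : ∀ i, X i // ∀ i, S.bond (Nat.le_succ i) (g (i + 1)) = g i})
        = p0 := h1
    exact congrFun (congrArg Subtype.val h2) m
  -- assemble
  refine ⟨N, fun j hkj => ?_⟩
  have hji : j < max (j + 1) (J j) :=
    lt_of_lt_of_le (Nat.lt_succ_self j) (le_max_left _ _)
  refine ⟨max (j + 1) (J j), hji, ?_⟩
  ext x
  simp only [Set.mem_setOf_eq]
  constructor
  · intro hx
    have hyA : S.bond hji.le x ∈ A j := memA j _ hji.le (le_max_right _ _) x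
    obtain ⟨g, hg1, hgj, hgd⟩ := thread j _ hyA
    have hgN : g N = pt N := by
      rw [hgd N hkj.le, ← S.bond_comp hkj.le hji.le]
      exact hx
    have h3 : g j = pt j := iso g hg1 hgN j
    rw [← hgj]
    exact h3
  · intro hx
    show S.bond (hkj.le.trans hji.le) x = pt N
    rw [S.bond_comp hkj.le hji.le, hx]
    exact S.bond_pt hkj.le
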